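/- Let X be a real topological vector space and T a continuous linear operator on X. Then T is u-frequently hypercyclic if and only if -T is u-frequently hypercyclic, and their sets of u-frequently hypercyclic vectors coincide. -/

import Mathlib

open Filter Topology

open scoped Classical in
noncomputable def upperDensity (A : Set ℕ) : ℝ :=
  Filter.limsup (fun n : ℕ => (((Finset.range (n + 1)).filter (fun m => m ∈ A)).card : ℝ) / n) Filter.atTop

def uFHCVector {𝕜 X : Type*} [RCLike 𝕜] [AddCommGroup X] [Module 𝕜 X] [TopologicalSpace X]
    [IsTopologicalAddGroup X] [ContinuousSMul 𝕜 X] (T : X →L[𝕜] X) (x : X) : Prop :=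
  ∀ U : Set X, IsOpen U → U.Nonempty → 0 < upperDensity {n : ℕ | (T ^ n) x ∈ U}

set_option linter.unusedSectionVars false

open scoped Classical

noncomputable def dcnt (A : Set ℕ) (n : ℕ) : ℝ :=
  (((Finset.range (n + 1)).filter (fun m => m ∈ A)).card : ℝ) / n

lemma upperDensity_eq (A : Set ℕ) : upperDensity A = Filter.limsup (dcnt A) Filter.atTop := rfl

lemma dcnt_nonneg (A : Set ℕ) (n : ℕ) : 0 ≤ dcnt A n := by
  unfold dcnt; positivity

lemma dcnt_card_le (A : Set ℕ) (n : ℕ) :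
    ((Finset.range (n + 1)).filter (fun m => m ∈ A)).card ≤ n + 1 :=
  le_trans (Finset.card_filter_le _ _) (by simp)

lemma dcnt_le_two (A : Set ℕ) (n : ℕ) : dcnt A n ≤ 2 := by
  unfold dcnt
  rcases Nat.eq_zero_or_pos n with h | h
  · subst h; simp
  · rw [div_le_iff₀ (by positivity)]
    have h1 : ((Finset.filter (fun m => m ∈ A) (Finset.range (n + 1))).card : ℝ) ≤ (n : ℝ) + 1 := by
      exact_mod_cast dcnt_card_le A n
    have h2 : (1:ℝ) ≤ n := by exact_mod_cast h
    nlinarith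

lemma dcnt_bdd (A : Set ℕ) : IsBoundedUnder (· ≤ ·) atTop (dcnt A) :=
  isBoundedUnder_of ⟨2, dcnt_le_two A⟩

lemma dcnt_cobdd (A : Set ℕ) : IsCoboundedUnder (· ≤ ·) atTop (dcnt A) :=
  isCoboundedUnder_le_of_le atTop (dcnt_nonneg A)

lemma upperDensity_nonneg (A : Set ℕ) : 0 ≤ upperDensity A := by
  rw [upperDensity_eq]
  exact le_limsup_of_frequently_le (Frequently.of_forall (dcnt_nonneg A)) (dcnt_bdd A)

lemma dcnt_mono {A B : Set ℕ} (h : A ⊆ B) (n : ℕ) : dcnt A n ≤ dcnt B n := by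
  unfold dcnt
  rcases Nat.eq_zero_or_pos n with h0 | h0
  · subst h0; simp
  rw [div_le_div_iff_of_pos_right (by positivity : (0:ℝ) < n)]
  have hsub : (Finset.range (n + 1)).filter (fun m => m ∈ A) ⊆
      (Finset.range (n + 1)).filter (fun m => m ∈ B) := by
    intro m hm
    simp only [Finset.mem_filter] at *
    exact ⟨hm.1, h hm.2⟩
  exact_mod_cast Finset.card_le_card hsub

lemma upperDensity_mono {A B : Set ℕ} (h : A ⊆ B) : upperDensity A ≤ upperDensity B := by
  rw [upperDensity_eq, upperDensity_eq]
  exact limsup_le_limsup (Eventually.of_forall (dcnt_mono h)) (dcnt_cobdd A) (dcnt_bdd B)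

lemma upperDensity_le_add {A B C : Set ℕ} (h : A ⊆ B ∪ C) :
    upperDensity A ≤ upperDensity B + upperDensity C := by
  have hpt : ∀ n, dcnt A n ≤ dcnt B n + dcnt C n := by
    intro n
    unfold dcnt
    rw [← add_div]
    rcases Nat.eq_zero_or_pos n with h0 | h0
    · subst h0; simp
    gcongr
    have hsub : (Finset.range (n + 1)).filter (fun m => m ∈ A) ⊆
        ((Finset.range (n + 1)).filter (fun m => m ∈ B)) ∪
        ((Finset.range (n + 1)).filter (fun m => m ∈ C)) := by
      intro m hm
      simp only [Finset.mem_filter, Finset.mem_union] at *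
      rcases h hm.2 with hb | hc
      · exact Or.inl ⟨hm.1, hb⟩
      · exact Or.inr ⟨hm.1, hc⟩
    have := le_trans (Finset.card_le_card hsub) (Finset.card_union_le _ _)
    exact_mod_cast this
  have key : ∀ ε : ℝ, 0 < ε → upperDensity A ≤ upperDensity B + upperDensity C + ε := by
    intro ε hε
    have hB : ∀ᶠ n in atTop, dcnt B n < upperDensity B + ε/2 :=
      eventually_lt_of_limsup_lt (by rw [upperDensity_eq] at *; linarith) (dcnt_bdd B)
    have hC : ∀ᶠ n in atTop, dcnt C n < upperDensity C + ε/2 :=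
      eventually_lt_of_limsup_lt (by rw [upperDensity_eq] at *; linarith) (dcnt_bdd C)
    rw [upperDensity_eq]
    apply limsup_le_of_le (dcnt_cobdd A)
    filter_upwards [hB, hC] with n hb hc
    have := hpt n
    linarith
  by_contra hcon
  push_neg at hcon
  have := key ((upperDensity A - (upperDensity B + upperDensity C))/2) (by linarith)
  linarith

lemma upperDensity_le_zero {A : Set ℕ} {k : ℕ} (h : ∀ n ∈ A, n < k) : upperDensity A ≤ 0 := by
  have hcard : ∀ n : ℕ, (((Finset.range (n + 1)).filter (fun m => m ∈ A)).card : ℝ) ≤ k := by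
    intro n
    have : (Finset.range (n + 1)).filter (fun m => m ∈ A) ⊆ Finset.range k := by
      intro m hm
      simp only [Finset.mem_filter, Finset.mem_range] at *
      exact h m hm.2
    exact_mod_cast le_trans (Finset.card_le_card this) (by simp)
  have key : ∀ ε : ℝ, 0 < ε → upperDensity A ≤ ε := by
    intro ε hε
    rw [upperDensity_eq]
    apply limsup_le_of_le (dcnt_cobdd A)
    rw [eventually_atTop]
    obtain ⟨N, hN⟩ := exists_nat_gt ((k : ℝ)/ε)
    refine ⟨N + 1, fun n hn => ?_⟩
    have hn1 : (1:ℝ) ≤ n := by exact_mod_cast le_trans (Nat.le_add_left 1 N) hn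
    have hnn : ((k:ℝ)/ε) < n := lt_of_lt_of_le hN (by exact_mod_cast le_trans (Nat.le_succ N) hn)
    unfold dcnt
    rw [div_le_iff₀ (by linarith)]
    calc (((Finset.range (n + 1)).filter (fun m => m ∈ A)).card : ℝ) ≤ k := hcard n
      _ ≤ ε * n := by rw [div_lt_iff₀ hε] at hnn; linarith
  by_contra hcon
  push_neg at hcon
  have := key (upperDensity A / 2) (by linarith)
  linarith

lemma upperDensity_exists_ge {A : Set ℕ} (h : 0 < upperDensity A) (k : ℕ) :
    ∃ n, k ≤ n ∧ n ∈ A := by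
  by_contra hcon
  push_neg at hcon
  have : ∀ n ∈ A, n < k := fun n hn => by
    by_contra hx
    push_neg at hx
    exact absurd hn (hcon n hx)
  linarith [upperDensity_le_zero this]

lemma upperDensity_univ_pos : 0 < upperDensity (Set.univ : Set ℕ) := by
  have : (0:ℝ) < 1 := one_pos
  refine lt_of_lt_of_le this ?_
  rw [upperDensity_eq]
  apply le_limsup_of_frequently_le ?_ (dcnt_bdd _)
  rw [frequently_atTop]
  intro a
  refine ⟨a + 1, Nat.le_add_right _ _, ?_⟩
  unfold dcnt
  rw [le_div_iff₀ (by positivity)]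
  rw [Finset.filter_congr_decidable]
  have hcard : ((Finset.range (a + 1 + 1)).filter (fun m => m ∈ (Set.univ : Set ℕ))).card
      = a + 1 + 1 := by
    simp
  rw [hcard]
  push_cast
  linarith

lemma upperDensity_le_two (A : Set ℕ) : upperDensity A ≤ 2 := by
  rw [upperDensity_eq]
  exact limsup_le_of_le (dcnt_cobdd A) (Eventually.of_forall (dcnt_le_two A))

lemma upperDensity_shift {S A : Set ℕ} {c : ℕ} (h : ∀ n ∈ S, n + c ∈ A) :
    upperDensity S ≤ upperDensity A := by
  have hcard : ∀ n : ℕ, (((Finset.range (n+1)).filter (fun m => m ∈ S)).card : ℝ) ≤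
      (((Finset.range (n+c+1)).filter (fun m => m ∈ A)).card : ℝ) := by
    intro n
    have : ((Finset.range (n+1)).filter (fun m => m ∈ S)).card ≤
        ((Finset.range (n+c+1)).filter (fun m => m ∈ A)).card := by
      apply Finset.card_le_card_of_injOn (fun m => m + c)
      · intro m hm
        simp only [Finset.coe_filter, Finset.mem_filter, Finset.mem_range, Set.mem_setOf_eq] at *
        exact ⟨by omega, h m hm.2⟩
      · intro a _ b _ hab
        simp only at hab
        omega
    exact_mod_cast this
  have key : ∀ δ : ℝ, 0 < δ → upperDensity S ≤ upperDensity A + 2*δ := by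
    intro δ hδ
    have hfr : ∃ᶠ n in atTop, upperDensity S - δ < dcnt S n := by
      apply frequently_lt_of_lt_limsup (dcnt_cobdd S)
      rw [← upperDensity_eq]; linarith
    obtain ⟨N0, hN0⟩ := exists_nat_gt ((2*(c:ℝ))/δ)
    set N := N0 + 1 with hNdef
    have hfreqA : ∃ᶠ m in atTop, upperDensity S - 2*δ ≤ dcnt A m := by
      rw [frequently_atTop]
      intro M
      obtain ⟨n, hdn, hn⟩ := (hfr.and_eventually (eventually_ge_atTop (max M N))).exists
      refine ⟨n + c, le_trans (le_trans (le_max_left M N) hn) (Nat.le_add_right _ _), ?_⟩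
      have hn1 : (1:ℝ) ≤ n := by
        have : N ≤ n := le_trans (le_max_right M N) hn
        exact_mod_cast le_trans (by omega : 1 ≤ N) this
      have hn0 : (0:ℝ) < n := by linarith
      have hδn : 2*(c:ℝ) ≤ δ * n := by
        have hNn : ((N:ℕ):ℝ) ≤ n := by exact_mod_cast le_trans (le_max_right M N) hn
        have : (2*(c:ℝ))/δ < N := lt_of_lt_of_le hN0 (by exact_mod_cast Nat.le_succ N0)
        rw [div_lt_iff₀ hδ] at this
        calc 2*(c:ℝ) ≤ N * δ := this.le
          _ ≤ n * δ := by nlinarith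
          _ = δ * n := mul_comm _ _
      unfold dcnt at hdn ⊢
      rw [lt_div_iff₀ hn0] at hdn
      have hnc0 : (0:ℝ) < ((n + c : ℕ):ℝ) := by push_cast; linarith [Nat.cast_nonneg (α := ℝ) c]
      rw [le_div_iff₀ hnc0]
      set x := (((Finset.range (n+1)).filter (fun m => m ∈ S)).card : ℝ) with hxdef
      have hx2 : x ≤ 2 * n := by
        have := dcnt_le_two S n
        unfold dcnt at this
        rw [div_le_iff₀ hn0] at this
        linarith
      have hxA : x ≤ (((Finset.range (n+c+1)).filter (fun m => m ∈ A)).card : ℝ) := hcard n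
      have hS2 : upperDensity S ≤ 2 := upperDensity_le_two S
      have hc0 : (0:ℝ) ≤ c := Nat.cast_nonneg c
      have hδc : (0:ℝ) ≤ δ * c := by positivity
      have hcast : ((n + c : ℕ):ℝ) = (n:ℝ) + (c:ℝ) := by push_cast; ring
      rw [hcast]
      nlinarith [mul_le_mul_of_nonneg_right hS2 hc0]
    have := le_limsup_of_frequently_le hfreqA (dcnt_bdd A)
    rw [← upperDensity_eq] at this
    linarith
  by_contra hcon
  push_neg at hcon
  have := key ((upperDensity S - upperDensity A)/4) (by linarith)
  linarith

lemma no_dense_orbit_findim {Z : Type*} [AddCommGroup Z] [Module ℝ Z] [TopologicalSpace Z]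
    [IsTopologicalAddGroup Z] [ContinuousSMul ℝ Z] [T2Space Z] [FiniteDimensional ℝ Z]
    [Nontrivial Z] (M : Z →ₗ[ℝ] Z) (v : Z) :
    ¬ Dense (Set.range fun n : ℕ => (M ^ n) v) := by
  intro hd
  classical
  have hk0 : 0 < Module.finrank ℝ Z := Module.finrank_pos
  set b : Module.Basis (Fin (Module.finrank ℝ Z)) ℝ Z := Module.finBasis ℝ Z with hb
  set A : Matrix (Fin (Module.finrank ℝ Z)) (Fin (Module.finrank ℝ Z)) ℝ :=
    LinearMap.toMatrix b b M with hA
  set Ac : Matrix (Fin (Module.finrank ℝ Z)) (Fin (Module.finrank ℝ Z)) ℂ :=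
    A.map (algebraMap ℝ ℂ) with hAc
  haveI : Nonempty (Fin (Module.finrank ℝ Z)) := ⟨⟨0, hk0⟩⟩
  obtain ⟨μ, hμ⟩ := Module.End.exists_eigenvalue
    (Matrix.toLin' Ac.transpose : Module.End ℂ (Fin (Module.finrank ℝ Z) → ℂ))
  obtain ⟨w, hw⟩ := hμ.exists_hasEigenvector
  have hweq : Ac.transpose.mulVec w = μ • w := by
    have := hw.apply_eq_smul
    rwa [Matrix.toLin'_apply] at this
  have hwne : w ≠ 0 := hw.right
  -- the functional
  set φ : Z →ₗ[ℝ] ℂ :=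
    { toFun := fun u => ∑ i, w i * ((b.repr u i : ℝ) : ℂ)
      map_add' := by
        intro u1 u2
        simp only [map_add, Finsupp.add_apply, Complex.ofReal_add, mul_add]
        rw [Finset.sum_add_distrib]
      map_smul' := by
        intro r u
        simp only [map_smul, Finsupp.smul_apply, smul_eq_mul, Complex.ofReal_mul,
          RingHom.id_apply, Complex.real_smul, Finset.mul_sum]
        exact Finset.sum_congr rfl (fun i _ => by ring) } with hφ
  have hφc : Continuous φ := φ.continuous_of_finiteDimensional
  have hφb : ∀ j, φ (b j) = w j := by
    intro j
    simp only [hφ, LinearMap.coe_mk, AddHom.coe_mk, Module.Basis.repr_self]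
    rw [Finset.sum_eq_single j]
    · simp
    · intro i _ hij
      simp [Finsupp.single_apply, Ne.symm hij]
    · intro hj
      exact absurd (Finset.mem_univ j) hj
  have hkey : ∀ u, φ (M u) = μ * φ u := by
    intro u
    have hrep : A.mulVec (b.repr u) = b.repr (M u) := LinearMap.toMatrix_mulVec_repr b b M u
    have h1 : φ (M u) = dotProduct w (Ac.mulVec (fun j => ((b.repr u j : ℝ) : ℂ))) := by
      simp only [hφ, LinearMap.coe_mk, AddHom.coe_mk, dotProduct]
      apply Finset.sum_congr rfl
      intro i _
      congr 1
      rw [← hrep]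
      simp only [Matrix.mulVec, dotProduct, hAc, Matrix.map_apply]
      push_cast
      rfl
    rw [h1, Matrix.dotProduct_mulVec, ← Matrix.transpose_transpose Ac,
      Matrix.vecMul_transpose, hweq, smul_dotProduct]
    simp only [smul_eq_mul, hφ, LinearMap.coe_mk, AddHom.coe_mk, dotProduct]
  have horb : ∀ n : ℕ, φ ((M ^ n) v) = μ ^ n * φ v := by
    intro n
    induction n with
    | zero => simp
    | succ n ih =>
      rw [pow_succ' M n, Module.End.mul_apply, hkey, ih, pow_succ']
      ring
  have hsub : Set.range φ ⊆ closure (Set.range fun n : ℕ => μ ^ n * φ v) := by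
    rintro - ⟨u, rfl⟩
    have hu : u ∈ closure (Set.range fun n : ℕ => (M ^ n) v) := hd u
    have := image_closure_subset_closure_image (f := φ) hφc (Set.mem_image_of_mem φ hu)
    rw [← Set.range_comp] at this
    have hre : Set.range (φ ∘ fun n : ℕ => (M ^ n) v) = Set.range fun n : ℕ => μ ^ n * φ v := by
      apply congrArg Set.range
      funext n
      exact horb n
    rwa [hre] at this
  by_cases hc : φ v = 0
  · have h0 : (Set.range fun n : ℕ => μ ^ n * φ v) = {0} := by
      rw [hc]
      ext z
      simp
    rw [h0, closure_singleton] at hsub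
    obtain ⟨j, hj⟩ := Function.ne_iff.mp hwne
    exact hj (by simpa [hφb j] using hsub ⟨b j, rfl⟩)
  · have habs : 0 < ‖φ v‖ := norm_pos_iff.mpr hc
    by_cases hμ1 : 1 ≤ ‖μ‖
    · have hcl : closure (Set.range fun n : ℕ => μ ^ n * φ v) ⊆
          {z : ℂ | ‖φ v‖ ≤ ‖z‖} := by
        apply closure_minimal ?_ (isClosed_le continuous_const continuous_norm)
        rintro - ⟨n, rfl⟩
        simp only [Set.mem_setOf_eq, norm_mul, norm_pow]
        nlinarith [one_le_pow₀ (n := n) hμ1, norm_nonneg (φ v)]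
      have := hcl (hsub ⟨0, map_zero φ⟩)
      simp only [Set.mem_setOf_eq, norm_zero] at this
      linarith
    · push_neg at hμ1
      have hcl : closure (Set.range fun n : ℕ => μ ^ n * φ v) ⊆
          {z : ℂ | ‖z‖ ≤ ‖φ v‖} := by
        apply closure_minimal ?_ (isClosed_le continuous_norm continuous_const)
        rintro - ⟨n, rfl⟩
        simp only [Set.mem_setOf_eq, norm_mul, norm_pow]
        have h1 : ‖μ‖ ^ n ≤ 1 :=
          pow_le_one₀ (norm_nonneg μ) hμ1.le
        nlinarith [norm_nonneg (φ v)]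
      set t : ℝ := (‖φ v‖ + 1) / ‖φ v‖ with ht
      have ht0 : 0 < t := by positivity
      have hmem := hcl (hsub ⟨t • v, rfl⟩)
      simp only [Set.mem_setOf_eq, map_smul] at hmem
      rw [Complex.real_smul, norm_mul, Complex.norm_real, Real.norm_eq_abs, abs_of_pos ht0] at hmem
      rw [ht, div_mul_eq_mul_div, mul_comm] at hmem
      rw [div_le_iff₀ habs] at hmem
      nlinarith

section Bourdon

variable {X : Type*} [AddCommGroup X] [Module ℝ X] [TopologicalSpace X]
  [IsTopologicalAddGroup X] [ContinuousSMul ℝ X]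

lemma dense_image_of_continuous_surjective {Q : Type*} [TopologicalSpace Q]
    {π : X → Q} (hc : Continuous π) (hs : Function.Surjective π)
    {s : Set X} (hd : Dense s) : Dense (π '' s) := by
  rw [dense_iff_inter_open]
  intro O hO hne
  obtain ⟨q, hq⟩ := hne
  obtain ⟨u, rfl⟩ := hs q
  have hopen : IsOpen (π ⁻¹' O) := hO.preimage hc
  obtain ⟨y, hy⟩ := (dense_iff_inter_open.mp hd) (π ⁻¹' O) hopen ⟨u, hq⟩
  exact ⟨π y, ⟨hy.1, Set.mem_image_of_mem π hy.2⟩⟩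

set_option maxHeartbeats 1000000 in
lemma quotient_contra [T2Space X] (T : X →L[ℝ] X) (x : X) (Y : Submodule ℝ X)
    (hYclosed : IsClosed (Y : Set X)) (hne : Y ≠ ⊤)
    (hTY : ∀ y ∈ Y, T y ∈ Y)
    (hx : Dense (Set.range fun n : ℕ => (T ^ n) x))
    (c : ℕ →₀ ℝ) (hc : c ≠ 0)
    (hrelX : ∀ u : X, ∑ i ∈ c.support, c i • (T ^ i) u ∈ Y) : False := by
  classical
  haveI hYC : IsClosed (Y : Set X) := hYclosed
  haveI : Nontrivial (X ⧸ Y) :=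
    Submodule.Quotient.nontrivial_iff.mpr hne
  set π : X →ₗ[ℝ] X ⧸ Y := Y.mkQ with hπ
  have hπcont : Continuous π := continuous_quot_mk
  have hπsurj : Function.Surjective π := Submodule.mkQ_surjective Y
  have hTinv : Y ≤ Y.comap (T : X →ₗ[ℝ] X) := fun y hy => hTY y hy
  set Tq : (X ⧸ Y) →ₗ[ℝ] (X ⧸ Y) := Submodule.mapQ Y Y (T : X →ₗ[ℝ] X) hTinv with hTq
  have hTqapp : ∀ u : X, Tq (π u) = π (T u) := by
    intro u
    rw [hπ, Submodule.mkQ_apply, Submodule.mkQ_apply, hTq, Submodule.mapQ_apply,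
      ContinuousLinearMap.coe_coe]
  have hTqn : ∀ (n : ℕ) (u : X), (Tq ^ n) (π u) = π ((T ^ n) u) := by
    intro n
    induction n with
    | zero => intro u; simp
    | succ n ih =>
      intro u
      rw [pow_succ' Tq n, Module.End.mul_apply, ih u, hTqapp, pow_succ' T n,
        ContinuousLinearMap.mul_apply]
  have hxq : Dense (Set.range fun n : ℕ => (Tq ^ n) (π x)) := by
    have h1 : Dense (π '' (Set.range fun n : ℕ => (T ^ n) x)) :=
      dense_image_of_continuous_surjective hπcont hπsurj hx
    have h2 : π '' (Set.range fun n : ℕ => (T ^ n) x) =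
        Set.range fun n : ℕ => (Tq ^ n) (π x) := by
      rw [← Set.range_comp]
      apply congrArg Set.range
      funext n
      exact (hTqn n x).symm
    rwa [h2] at h1
  have hrel : ∀ u : X, ∑ i ∈ c.support, c i • (Tq ^ i) (π u) = 0 := by
    intro u
    have h1 : π (∑ i ∈ c.support, c i • (T ^ i) u) = 0 :=
      (Submodule.Quotient.mk_eq_zero Y).mpr (hrelX u)
    calc ∑ i ∈ c.support, c i • (Tq ^ i) (π u)
        = ∑ i ∈ c.support, c i • π ((T ^ i) u) := by
          apply Finset.sum_congr rfl
          intro i _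
          rw [hTqn i u]
      _ = π (∑ i ∈ c.support, c i • (T ^ i) u) := by
          rw [map_sum]
          apply Finset.sum_congr rfl
          intro i _
          rw [map_smul]
      _ = 0 := h1
  set d := c.support.max' (Finsupp.support_nonempty_iff.mpr hc) with hd
  have hdmem : d ∈ c.support := Finset.max'_mem _ _
  have hcd : c d ≠ 0 := Finsupp.mem_support_iff.mp hdmem
  by_cases hd0 : d = 0
  · apply hne
    have hsupp : c.support = {0} := by
      apply Finset.eq_singleton_iff_unique_mem.mpr
      constructor
      · rw [← hd0]; exact hdmem
      · intro i hi
        have := Finset.le_max' c.support i hi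
        omega
    have hc0 : c 0 ≠ 0 := by rwa [hd0] at hcd
    rw [eq_top_iff]
    intro v _
    have := hrelX ((c 0)⁻¹ • v)
    rw [hsupp, Finset.sum_singleton, pow_zero, ContinuousLinearMap.one_apply,
      smul_smul, mul_inv_cancel₀ hc0, one_smul] at this
    exact this
  · set gens : Finset (X ⧸ Y) := (Finset.range d).image (fun i => (Tq ^ i) (π x)) with hgens
    set W : Submodule ℝ (X ⧸ Y) := Submodule.span ℝ (gens : Set (X ⧸ Y)) with hW
    haveI : FiniteDimensional ℝ W := FiniteDimensional.span_finset ℝ gens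
    have hWorb : ∀ n, (Tq ^ n) (π x) ∈ W := by
      intro n
      induction n using Nat.strong_induction_on with
      | _ n ih =>
        by_cases hn : n < d
        · apply Submodule.subset_span
          exact Finset.mem_coe.mpr (Finset.mem_image.mpr ⟨n, Finset.mem_range.mpr hn, rfl⟩)
        · push_neg at hn
          have hnk : d + (n - d) = n := by omega
          set k := n - d with hk
          have h0 := hrel ((T ^ k) x)
          have h0' : ∑ i ∈ c.support, c i • (Tq ^ (i + k)) (π x) = 0 := by
            rw [← h0]
            apply Finset.sum_congr rfl
            intro i _
            congr 1
            rw [← hTqn k x, pow_add, Module.End.mul_apply]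
          rw [← Finset.add_sum_erase _ _ hdmem] at h0'
          have hiso : c d • (Tq ^ n) (π x) =
              - ∑ i ∈ c.support.erase d, c i • (Tq ^ (i + k)) (π x) := by
            rw [← hnk]
            exact eq_neg_of_add_eq_zero_left h0'
          have heq2 : (Tq ^ n) (π x) =
              (-(c d)⁻¹) • ∑ i ∈ c.support.erase d, c i • (Tq ^ (i + k)) (π x) := by
            calc (Tq ^ n) (π x) = (c d)⁻¹ • (c d • (Tq ^ n) (π x)) := by
                  rw [smul_smul, inv_mul_cancel₀ hcd, one_smul]
              _ = (c d)⁻¹ • (- ∑ i ∈ c.support.erase d, c i • (Tq ^ (i + k)) (π x)) := by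
                  rw [hiso]
              _ = _ := by rw [smul_neg, neg_smul]
          rw [heq2]
          apply Submodule.smul_mem
          apply Submodule.sum_mem
          intro i hi
          apply Submodule.smul_mem
          have hid : i < d := lt_of_le_of_ne
            (Finset.le_max' _ _ (Finset.mem_of_mem_erase hi)) (Finset.ne_of_mem_erase hi)
          exact ih (i + k) (by omega)
    have hWclosed : IsClosed (W : Set (X ⧸ Y)) := Submodule.closed_of_finiteDimensional W
    have hWtop : W = ⊤ := by
      rw [eq_top_iff]
      intro q _
      have hq : q ∈ closure (Set.range fun n : ℕ => (Tq ^ n) (π x)) := hxq q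
      have hsub2 : Set.range (fun n : ℕ => (Tq ^ n) (π x)) ⊆ (W : Set _) := by
        rintro - ⟨n, rfl⟩
        exact hWorb n
      exact (closure_minimal hsub2 hWclosed) hq
    haveI : FiniteDimensional ℝ (X ⧸ Y) := by
      have h5 : FiniteDimensional ℝ (⊤ : Submodule ℝ (X ⧸ Y)) := hWtop ▸
        (inferInstance : FiniteDimensional ℝ W)
      exact Module.Finite.equiv (Submodule.topEquiv)
    exact absurd hxq (no_dense_orbit_findim Tq (π x))

lemma bourdon_hc [T2Space X] (T : X →L[ℝ] X) (x : X)
    (hx : Dense (Set.range fun n : ℕ => (T ^ n) x))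
    (z : X) (hz : z ∈ Submodule.span ℝ (Set.range fun n : ℕ => (T ^ n) x)) (hz0 : z ≠ 0) :
    Dense (Set.range fun n : ℕ => (T ^ n) z) := by
  classical
  obtain ⟨c, hcz⟩ := Finsupp.mem_span_range_iff_exists_finsupp.mp hz
  have hc : c ≠ 0 := by
    rintro rfl
    rw [Finsupp.sum_zero_index] at hcz
    exact hz0 hcz.symm
  set L : X →L[ℝ] X := ∑ i ∈ c.support, c i • T ^ i with hL
  have hLapp : ∀ u : X, L u = ∑ i ∈ c.support, c i • (T ^ i) u := by
    intro u
    rw [hL, ContinuousLinearMap.sum_apply]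
    exact Finset.sum_congr rfl (fun i _ => rfl)
  have hLx : L x = z := by
    rw [hLapp, ← hcz]; rfl
  have hcommn : ∀ (n : ℕ) (u : X), L ((T ^ n) u) = (T ^ n) (L u) := by
    intro n u
    rw [hLapp, hLapp, map_sum]
    apply Finset.sum_congr rfl
    intro i _
    rw [map_smul, ← ContinuousLinearMap.mul_apply, ← ContinuousLinearMap.mul_apply,
      ← pow_add, ← pow_add, add_comm]
  set Y : Submodule ℝ X := (LinearMap.range (L : X →ₗ[ℝ] X)).topologicalClosure with hY
  have hYcoe : (Y : Set X) = closure (LinearMap.range (L : X →ₗ[ℝ] X) : Set X) := rfl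
  have hYclosed : IsClosed (Y : Set X) := Submodule.isClosed_topologicalClosure _
  have hrangeL : ∀ u : X, L u ∈ Y := by
    intro u
    exact (LinearMap.range (L : X →ₗ[ℝ] X)).le_topologicalClosure ⟨u, rfl⟩
  have hYtop : Y = ⊤ := by
    by_contra hne
    have hTY : ∀ y ∈ Y, T y ∈ Y := by
      intro y hy
      have h1 : T y ∈ closure (T '' (LinearMap.range (L : X →ₗ[ℝ] X) : Set X)) := by
        apply image_closure_subset_closure_image T.continuous
        exact Set.mem_image_of_mem T hy
      apply closure_minimal ?_ hYclosed h1
      rintro - ⟨-, ⟨u, rfl⟩, rfl⟩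
      simp only [ContinuousLinearMap.coe_coe]
      have h2 : T (L u) = L (T u) := by
        have := hcommn 1 u
        simpa using this.symm
      rw [h2]
      exact hrangeL (T u)
    apply quotient_contra T x Y hYclosed hne hTY hx c hc
    intro u
    rw [← hLapp u]
    exact hrangeL u
  have hsub : (Y : Set X) ⊆ closure (Set.range fun n : ℕ => (T ^ n) z) := by
    rw [hYcoe]
    apply closure_minimal ?_ isClosed_closure
    rintro - ⟨u, rfl⟩
    have hu : u ∈ closure (Set.range fun n : ℕ => (T ^ n) x) := hx u
    have h2 : L u ∈ closure (L '' (Set.range fun n : ℕ => (T ^ n) x)) :=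
      image_closure_subset_closure_image L.continuous (Set.mem_image_of_mem L hu)
    have h3 : L '' (Set.range fun n : ℕ => (T ^ n) x) = Set.range fun n : ℕ => (T ^ n) z := by
      rw [← Set.range_comp]
      apply congrArg Set.range
      funext n
      show L ((T ^ n) x) = (T ^ n) z
      rw [hcommn n x, hLx]
    rwa [h3] at h2
  rw [dense_iff_closure_eq]
  apply Set.eq_univ_of_univ_subset
  intro u _
  apply hsub
  rw [hYtop]
  trivial

end Bourdon

section Ansari

variable {X : Type*} [AddCommGroup X] [Module ℝ X] [TopologicalSpace X]
  [IsTopologicalAddGroup X] [ContinuousSMul ℝ X]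

lemma joined_in_compl_zero (V : Submodule ℝ X) (p c : X) (hp : p ∈ V) (hc : c ∈ V)
    (hp0 : p ≠ 0) (hcs : c ∉ Submodule.span ℝ {p}) :
    JoinedIn ((V : Set X) \ {0}) p c := by
  have hcont : Continuous (fun t : unitInterval => (1 - (t:ℝ)) • p + (t:ℝ) • c) := by
    apply Continuous.add
    · exact (continuous_const.sub continuous_subtype_val).smul continuous_const
    · exact continuous_subtype_val.smul continuous_const
  refine ⟨⟨⟨fun t => (1 - (t:ℝ)) • p + (t:ℝ) • c, hcont⟩, by simp, by simp⟩, ?_⟩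
  intro t
  constructor
  · exact V.add_mem (V.smul_mem _ hp) (V.smul_mem _ hc)
  · simp only [Set.mem_singleton_iff]
    intro heq0
    have heq : (1 - (t:ℝ)) • p + (t:ℝ) • c = 0 := heq0
    by_cases ht : (t : ℝ) = 0
    · rw [ht] at heq
      simp at heq
      exact hp0 heq
    · apply hcs
      have h1 : (t:ℝ) • c = -((1 - (t:ℝ)) • p) := by
        rw [eq_neg_iff_add_eq_zero, add_comm]
        exact heq
      have h2 : c = (-( (t:ℝ)⁻¹ * (1 - (t:ℝ)))) • p := by
        calc c = (t:ℝ)⁻¹ • ((t:ℝ) • c) := by rw [smul_smul, inv_mul_cancel₀ ht, one_smul]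
          _ = (t:ℝ)⁻¹ • (-((1 - (t:ℝ)) • p)) := by rw [h1]
          _ = (-( (t:ℝ)⁻¹ * (1 - (t:ℝ)))) • p := by rw [smul_neg, smul_smul, neg_smul]
      exact Submodule.mem_span_singleton.mpr ⟨_, h2.symm⟩

lemma preconn_compl_zero (V : Submodule ℝ X) (u₀ v₀ : X) (hu₀ : u₀ ∈ V) (hu0 : u₀ ≠ 0)
    (hv₀ : v₀ ∈ V) (hv : v₀ ∉ Submodule.span ℝ {u₀}) :
    IsPreconnected ((V : Set X) \ {0}) := by
  have hv0 : v₀ ≠ 0 := fun h => hv (h ▸ Submodule.zero_mem _)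
  have hAB : ∀ r : X, ¬ (u₀ ∈ Submodule.span ℝ {r} ∧ v₀ ∈ Submodule.span ℝ {r}) := by
    rintro r ⟨h1, h2⟩
    obtain ⟨s, hs⟩ := Submodule.mem_span_singleton.mp h1
    obtain ⟨t, ht⟩ := Submodule.mem_span_singleton.mp h2
    have hs0 : s ≠ 0 := by rintro rfl; rw [zero_smul] at hs; exact hu0 hs.symm
    apply hv
    apply Submodule.mem_span_singleton.mpr ⟨t * s⁻¹, ?_⟩
    rw [← hs, ← ht, smul_smul, mul_assoc, inv_mul_cancel₀ hs0, mul_one]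
  have hAC : ∀ r : X, ¬ (u₀ ∈ Submodule.span ℝ {r} ∧ u₀ + v₀ ∈ Submodule.span ℝ {r}) := by
    rintro r ⟨h1, h2⟩
    obtain ⟨s, hs⟩ := Submodule.mem_span_singleton.mp h1
    obtain ⟨t, ht⟩ := Submodule.mem_span_singleton.mp h2
    have hs0 : s ≠ 0 := by rintro rfl; rw [zero_smul] at hs; exact hu0 hs.symm
    apply hv
    apply Submodule.mem_span_singleton.mpr ⟨(t - s) * s⁻¹, ?_⟩
    have hv₀eq : v₀ = (t - s) • r := by
      rw [sub_smul, ht, hs]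
      abel
    rw [← hs, smul_smul, mul_assoc, inv_mul_cancel₀ hs0, mul_one]
    exact hv₀eq.symm
  have hBC : ∀ r : X, ¬ (v₀ ∈ Submodule.span ℝ {r} ∧ u₀ + v₀ ∈ Submodule.span ℝ {r}) := by
    rintro r ⟨h1, h2⟩
    obtain ⟨t, ht⟩ := Submodule.mem_span_singleton.mp h1
    obtain ⟨w, hw⟩ := Submodule.mem_span_singleton.mp h2
    have hu₀eq : u₀ = (w - t) • r := by
      rw [sub_smul, hw, ht]
      abel
    have hwt : w - t ≠ 0 := by
      rintro h
      rw [h, zero_smul] at hu₀eq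
      exact hu0 hu₀eq
    apply hv
    apply Submodule.mem_span_singleton.mpr ⟨t * (w - t)⁻¹, ?_⟩
    rw [hu₀eq, smul_smul, mul_assoc, inv_mul_cancel₀ hwt, mul_one, ht]
  have hchoice : ∀ p q : X, p ≠ 0 → q ≠ 0 →
      ∃ cc, (cc ∈ V ∧ cc ≠ 0) ∧ cc ∉ Submodule.span ℝ {p} ∧ cc ∉ Submodule.span ℝ {q} := by
    intro p q hpne hqne
    have hu0V : u₀ + v₀ ≠ 0 := by
      intro h
      apply hv
      have : v₀ = -u₀ := by
        rw [eq_neg_iff_add_eq_zero, add_comm]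
        exact h
      rw [this]
      exact Submodule.neg_mem _ (Submodule.mem_span_singleton_self u₀)
    by_contra hno
    push_neg at hno
    have h1 := hno u₀ ⟨hu₀, hu0⟩
    have h2 := hno v₀ ⟨hv₀, hv0⟩
    have h3 := hno (u₀ + v₀) ⟨V.add_mem hu₀ hv₀, hu0V⟩
    have g1 : u₀ ∈ Submodule.span ℝ {p} ∨ u₀ ∈ Submodule.span ℝ {q} := by
      by_cases hx : u₀ ∈ Submodule.span ℝ {p}
      · exact Or.inl hx
      · exact Or.inr (h1 hx)
    have g2 : v₀ ∈ Submodule.span ℝ {p} ∨ v₀ ∈ Submodule.span ℝ {q} := by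
      by_cases hx : v₀ ∈ Submodule.span ℝ {p}
      · exact Or.inl hx
      · exact Or.inr (h2 hx)
    have g3 : u₀ + v₀ ∈ Submodule.span ℝ {p} ∨ u₀ + v₀ ∈ Submodule.span ℝ {q} := by
      by_cases hx : u₀ + v₀ ∈ Submodule.span ℝ {p}
      · exact Or.inl hx
      · exact Or.inr (h3 hx)
    rcases g1 with g1 | g1 <;> rcases g2 with g2 | g2 <;> rcases g3 with g3 | g3 <;>
      first
        | exact hAB _ ⟨g1, g2⟩
        | exact hAC _ ⟨g1, g3⟩
        | exact hBC _ ⟨g2, g3⟩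
  apply IsConnected.isPreconnected
  apply IsPathConnected.isConnected
  refine ⟨u₀, ⟨hu₀, by simpa using hu0⟩, ?_⟩
  rintro y ⟨hyV, hy0⟩
  simp only [Set.mem_singleton_iff] at hy0
  obtain ⟨cc, ⟨hccV, hcc0⟩, hccp, hccq⟩ := hchoice u₀ y hu0 hy0
  have j1 : JoinedIn ((V : Set X) \ {0}) u₀ cc := joined_in_compl_zero V u₀ cc hu₀ hccV hu0 hccp
  have j2 : JoinedIn ((V : Set X) \ {0}) y cc := joined_in_compl_zero V y cc hyV hccV hy0 hccq
  exact j1.trans j2.symm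

end Ansari

section EvenVisit

variable {X : Type*} [AddCommGroup X] [Module ℝ X] [TopologicalSpace X]
  [IsTopologicalAddGroup X] [ContinuousSMul ℝ X]

lemma even_visit [T2Space X] (T : X →L[ℝ] X) (x : X)
    (H : ∀ U : Set X, IsOpen U → U.Nonempty → 0 < upperDensity {n : ℕ | (T ^ n) x ∈ U})
    (U : Set X) (hU : IsOpen U) (hne : U.Nonempty) :
    ∃ m : ℕ, (T ^ (2 * m)) x ∈ U := by
  by_contra hcon
  push_neg at hcon
  have horb : ∀ (O : Set X), IsOpen O → O.Nonempty → ∀ k : ℕ, ∃ n, k ≤ n ∧ (T ^ n) x ∈ O := by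
    intro O hO hOne k
    exact upperDensity_exists_ge (H O hO hOne) k
  have hdense : Dense (Set.range fun n : ℕ => (T ^ n) x) := by
    rw [dense_iff_inter_open]
    intro O hO hOne
    obtain ⟨n, -, hn⟩ := horb O hO hOne 0
    exact ⟨_, hn, n, rfl⟩
  rcases subsingleton_or_nontrivial X with hS | hNT
  · obtain ⟨u, hu⟩ := hne
    exact hcon 0 (by rwa [Subsingleton.elim ((T ^ (2*0)) x) u])
  set E : Set X := Set.range fun m : ℕ => (T ^ (2 * m)) x with hE
  set O : Set X := Set.range fun m : ℕ => (T ^ (2 * m + 1)) x with hO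
  have hEO : (Set.range fun n : ℕ => (T ^ n) x) = E ∪ O := by
    ext y
    constructor
    · rintro ⟨n, rfl⟩
      rcases Nat.even_or_odd n with ⟨m, hm⟩ | ⟨m, hm⟩
      · exact Or.inl ⟨m, by show (T ^ (2 * m)) x = (T ^ n) x; rw [hm, two_mul]⟩
      · exact Or.inr ⟨m, by show (T ^ (2 * m + 1)) x = (T ^ n) x; rw [hm]⟩
    · rintro (⟨m, rfl⟩ | ⟨m, rfl⟩) <;> exact ⟨_, rfl⟩
  have hFG : closure E ∪ closure O = Set.univ := by
    rw [← closure_union, ← hEO]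
    exact hdense.closure_eq
  have hFU : closure E ⊆ Uᶜ := by
    apply closure_minimal ?_ (isClosed_compl_iff.mpr hU)
    rintro - ⟨m, rfl⟩
    exact hcon m
  have htail : Dense (Set.range fun n : ℕ => (T ^ (n + 1)) x) := by
    rw [dense_iff_inter_open]
    intro O' hO' hOne'
    obtain ⟨n, hn1, hn2⟩ := horb O' hO' hOne' 1
    obtain ⟨m, rfl⟩ : ∃ m, n = m + 1 := ⟨n - 1, by omega⟩
    exact ⟨_, hn2, m, rfl⟩
  have hTEO : T '' E ⊆ O := by
    rintro - ⟨-, ⟨m, rfl⟩, rfl⟩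
    refine ⟨m, ?_⟩
    show (T ^ (2 * m + 1)) x = T ((T ^ (2 * m)) x)
    rw [pow_succ' T (2*m), ContinuousLinearMap.mul_apply]
  have hTOE : T '' O ⊆ E := by
    rintro - ⟨-, ⟨m, rfl⟩, rfl⟩
    refine ⟨m + 1, ?_⟩
    show (T ^ (2 * (m + 1))) x = T ((T ^ (2 * m + 1)) x)
    have h2 : 2 * (m + 1) = (2 * m + 1) + 1 := by ring
    rw [h2, pow_succ' T (2*m+1), ContinuousLinearMap.mul_apply]
  have hGprop : ¬ Dense O := by
    intro hDO
    have hA : T '' (Set.univ : Set X) ⊆ closure E := by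
      rw [← hDO.closure_eq]
      intro y hy
      obtain ⟨w, hw, rfl⟩ := hy
      have h2 : T w ∈ closure (T '' O) :=
        image_closure_subset_closure_image T.continuous (Set.mem_image_of_mem T hw)
      exact closure_mono hTOE h2
    have hC : (Set.range fun n : ℕ => (T ^ (n + 1)) x) ⊆ closure E := by
      rintro - ⟨n, rfl⟩
      apply hA
      show (T ^ (n + 1)) x ∈ T '' Set.univ
      rw [pow_succ' T n, ContinuousLinearMap.mul_apply]
      exact Set.mem_image_of_mem T (Set.mem_univ _)
    have hEuniv : Dense E := by
      rw [dense_iff_closure_eq]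
      apply Set.eq_univ_of_univ_subset
      rw [← htail.closure_eq]
      exact closure_minimal hC isClosed_closure
    obtain ⟨y, hyU, m, rfl⟩ := hEuniv.inter_open_nonempty U hU hne
    exact hcon m hyU
  obtain ⟨p, hp⟩ : ∃ p, p ∉ closure O := by
    by_contra hh
    push_neg at hh
    exact hGprop (by rw [dense_iff_closure_eq]; exact Set.eq_univ_of_forall hh)
  set V : Submodule ℝ X := Submodule.span ℝ (Set.range fun n : ℕ => (T ^ n) x) with hV
  have hVd : Dense (V : Set X) := hdense.mono Submodule.subset_span
  by_cases hfin : FiniteDimensional ℝ V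
  · have hVclosed : IsClosed (V : Set X) := Submodule.closed_of_finiteDimensional V
    have hVuniv : (V : Set X) = Set.univ := by
      rw [← hVclosed.closure_eq]
      exact hVd.closure_eq
    have hVtop : V = ⊤ := by
      rw [Submodule.eq_top_iff']
      intro v
      exact Set.eq_univ_iff_forall.mp hVuniv v
    haveI : FiniteDimensional ℝ X := Module.Finite.equiv (LinearEquiv.ofTop V hVtop)
    have hpow : ∀ (n : ℕ) (y : X), (((T : X →ₗ[ℝ] X)) ^ n) y = (T ^ n) y := by
      intro n
      induction n with
      | zero => intro y; rfl
      | succ n ih =>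
        intro y
        rw [pow_succ, pow_succ, Module.End.mul_apply, ContinuousLinearMap.mul_apply]
        exact ih (T y)
    have hdense' : Dense (Set.range fun n : ℕ => (((T : X →ₗ[ℝ] X)) ^ n) x) := by
      have heq : (fun n : ℕ => (((T : X →ₗ[ℝ] X)) ^ n) x) = fun n : ℕ => (T ^ n) x := by
        funext n
        exact hpow n x
      rw [heq]
      exact hdense
    exact no_dense_orbit_findim (T : X →ₗ[ℝ] X) x hdense'
  have hex : ∃ u₀ ∈ V, u₀ ≠ 0 := by
    by_contra hh
    push_neg at hh
    apply hfin
    have hbot : V = ⊥ := by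
      rw [Submodule.eq_bot_iff]
      exact hh
    rw [hbot]
    infer_instance
  obtain ⟨u₀, hu₀V, hu₀0⟩ := hex
  have hex2 : ∃ v₀ ∈ V, v₀ ∉ Submodule.span ℝ {u₀} := by
    by_contra hh
    push_neg at hh
    apply hfin
    exact Submodule.finiteDimensional_of_le (fun v hv => hh v hv)
  obtain ⟨v₀, hv₀V, hv₀⟩ := hex2
  set D := (V : Set X) \ {0} with hD
  have hDconn : IsPreconnected D := preconn_compl_zero V u₀ v₀ hu₀V hu₀0 hv₀V hv₀
  have hDdense : Dense D := by
    rw [dense_iff_inter_open]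
    intro O' hO' hOne'
    obtain ⟨w, hwO, hwV⟩ := hVd.inter_open_nonempty O' hO' hOne'
    by_cases hw0 : w = 0
    · subst hw0
      have htend : Filter.Tendsto (fun t : ℝ => t • u₀) (nhds 0) (nhds 0) := by
        have hcont : Continuous (fun t : ℝ => t • u₀) := continuous_id.smul continuous_const
        have h3 := hcont.tendsto 0
        rwa [zero_smul] at h3
      have hev : ∀ᶠ t : ℝ in nhds 0, t • u₀ ∈ O' := htend.eventually_mem (hO'.mem_nhds hwO)
      have hcomb := (eventually_mem_nhdsWithin.and
        (hev.filter_mono (nhdsWithin_le_nhds (s := ({0}ᶜ : Set ℝ)))))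
      obtain ⟨t, ht0, htO⟩ := hcomb.exists
      refine ⟨t • u₀, htO, V.smul_mem t hu₀V, ?_⟩
      simp only [Set.mem_singleton_iff]
      exact smul_ne_zero (Set.mem_compl_singleton_iff.mp ht0) hu₀0
    · exact ⟨w, hwO, hwV, by simpa using hw0⟩
  obtain ⟨u, hu⟩ := hne
  have h1 : (D ∩ (closure E)ᶜ).Nonempty := by
    have := hDdense.inter_open_nonempty ((closure E)ᶜ) isClosed_closure.isOpen_compl
      ⟨u, fun hmem => (hFU hmem) hu⟩
    rwa [Set.inter_comm] at this
  have h2 : (D ∩ (closure O)ᶜ).Nonempty := by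
    have := hDdense.inter_open_nonempty ((closure O)ᶜ) isClosed_closure.isOpen_compl ⟨p, hp⟩
    rwa [Set.inter_comm] at this
  have hnotsub : ¬ (D ⊆ (closure E)ᶜ ∪ (closure O)ᶜ) := by
    intro hsub
    have hinter := hDconn ((closure E)ᶜ) ((closure O)ᶜ) isClosed_closure.isOpen_compl
      isClosed_closure.isOpen_compl hsub h1 h2
    have hempty : (closure E)ᶜ ∩ (closure O)ᶜ = ∅ := by
      rw [← Set.compl_union, hFG, Set.compl_univ]
    rw [hempty, Set.inter_empty] at hinter
    exact Set.not_nonempty_empty hinter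
  obtain ⟨z, hzD, hz2⟩ := Set.not_subset.mp hnotsub
  have hzF : z ∈ closure E := by
    by_contra hh
    exact hz2 (Or.inl hh)
  have hzG : z ∈ closure O := by
    by_contra hh
    exact hz2 (Or.inr hh)
  have hz0 : z ≠ 0 := by
    have := hzD.2
    simpa using this
  have hzdense := bourdon_hc T x hdense z hzD.1 hz0
  have horbz : ∀ n : ℕ, (T ^ n) z ∈ closure E ∩ closure O := by
    intro n
    induction n with
    | zero =>
      constructor
      · simpa using hzF
      · simpa using hzG
    | succ n ih =>
      rw [pow_succ' T n, ContinuousLinearMap.mul_apply]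
      constructor
      · exact closure_mono hTOE
          (image_closure_subset_closure_image T.continuous (Set.mem_image_of_mem T ih.2))
      · exact closure_mono hTEO
          (image_closure_subset_closure_image T.continuous (Set.mem_image_of_mem T ih.1))
  have hzuniv : (Set.univ : Set X) ⊆ closure E ∩ closure O := by
    rw [← hzdense.closure_eq]
    apply closure_minimal ?_ (isClosed_closure.inter isClosed_closure)
    rintro - ⟨n, rfl⟩
    exact horbz n
  exact (hFU (hzuniv (Set.mem_univ u)).1) hu

end EvenVisit

section MainT2

variable {X : Type*} [AddCommGroup X] [Module ℝ X] [TopologicalSpace X]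
  [IsTopologicalAddGroup X] [ContinuousSMul ℝ X]

lemma neg_pow_apply (T : X →L[ℝ] X) (x : X) (n : ℕ) :
    ((-T) ^ n) x = ((-1 : ℝ) ^ n) • ((T ^ n) x) := by
  have h1 : (-T) ^ n = ((-1 : ℝ) ^ n) • (T ^ n) := by
    rw [← neg_one_smul ℝ T, smul_pow]
  rw [h1, ContinuousLinearMap.smul_apply]

lemma main_t2 [T2Space X] (T : X →L[ℝ] X) (x : X)
    (H : ∀ U : Set X, IsOpen U → U.Nonempty → 0 < upperDensity {n : ℕ | (T ^ n) x ∈ U}) :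
    ∀ U : Set X, IsOpen U → U.Nonempty → 0 < upperDensity {n : ℕ | ((-T) ^ n) x ∈ U} := by
  intro U hU hneU
  by_contra hcontra
  have hE0 : upperDensity {n : ℕ | ((-T) ^ n) x ∈ U} ≤ 0 := not_lt.mp hcontra
  set Ae := {n : ℕ | (T ^ n) x ∈ U ∧ Even n} with hAe
  have hAeE : Ae ⊆ {n : ℕ | ((-T) ^ n) x ∈ U} := by
    rintro n ⟨hn1, hn2⟩
    simp only [Set.mem_setOf_eq]
    rw [neg_pow_apply T x n, hn2.neg_one_pow, one_smul]
    exact hn1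
  have hAe0 : upperDensity Ae ≤ 0 := le_trans (upperDensity_mono hAeE) hE0
  have hAo : 0 < upperDensity {n : ℕ | (T ^ n) x ∈ U ∧ ¬ Even n} := by
    have h1 := H U hU hneU
    have hsplit : {n : ℕ | (T ^ n) x ∈ U} ⊆
        Ae ∪ {n : ℕ | (T ^ n) x ∈ U ∧ ¬ Even n} := by
      intro n hn
      by_cases he : Even n
      · exact Or.inl ⟨hn, he⟩
      · exact Or.inr ⟨hn, he⟩
    have h2 := upperDensity_le_add hsplit
    linarith
  obtain ⟨b, -, hb1, hb2⟩ := upperDensity_exists_ge hAo 0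
  obtain ⟨m, hm⟩ := even_visit T x H U hU hneU
  have haEven : Even (2 * m) := even_two_mul m
  obtain ⟨s, c, hcodd, hsU, hscU⟩ :
      ∃ s c, Odd c ∧ (T ^ s) x ∈ U ∧ (T ^ (s + c)) x ∈ U := by
    rcases le_or_gt (2 * m) b with hab | hab
    · refine ⟨2 * m, b - 2 * m, Nat.Odd.sub_even hab (Nat.not_even_iff_odd.mp hb2) haEven,
        hm, ?_⟩
      rw [Nat.add_sub_cancel' hab]
      exact hb1
    · refine ⟨b, 2 * m - b, Nat.Even.sub_odd hab.le haEven (Nat.not_even_iff_odd.mp hb2),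
        hb1, ?_⟩
      rw [Nat.add_sub_cancel' hab.le]
      exact hm
  set Vset := U ∩ (fun y => (T ^ c) y) ⁻¹' U with hVset
  have hVopen : IsOpen Vset := hU.inter (((T ^ c).continuous).isOpen_preimage U hU)
  have hVne : Vset.Nonempty := by
    refine ⟨(T ^ s) x, hsU, ?_⟩
    show (T ^ c) ((T ^ s) x) ∈ U
    rw [← ContinuousLinearMap.mul_apply, ← pow_add, add_comm]
    exact hscU
  have hA'pos := H Vset hVopen hVne
  set A'o := {n : ℕ | (T ^ n) x ∈ Vset ∧ ¬ Even n} with hA'o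
  have hA'e0 : upperDensity {n : ℕ | (T ^ n) x ∈ Vset ∧ Even n} ≤ 0 := by
    refine le_trans (upperDensity_mono ?_) hAe0
    rintro n ⟨h1, h2⟩
    exact ⟨h1.1, h2⟩
  have hA'opos : 0 < upperDensity A'o := by
    have hsplit : {n : ℕ | (T ^ n) x ∈ Vset} ⊆
        {n : ℕ | (T ^ n) x ∈ Vset ∧ Even n} ∪ A'o := by
      intro n hn
      by_cases he : Even n
      · exact Or.inl ⟨hn, he⟩
      · exact Or.inr ⟨hn, he⟩
    have h2 := upperDensity_le_add hsplit
    linarith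
  have hshift : upperDensity A'o ≤ upperDensity Ae := by
    apply upperDensity_shift (c := c)
    rintro n ⟨hn1, hn2⟩
    constructor
    · have h3 : (T ^ c) ((T ^ n) x) ∈ U := hn1.2
      rwa [← ContinuousLinearMap.mul_apply, ← pow_add, add_comm] at h3
    · exact (Nat.not_even_iff_odd.mp hn2).add_odd hcodd
  linarith

end MainT2

section MainGen

variable {X : Type*} [AddCommGroup X] [Module ℝ X] [TopologicalSpace X]
  [IsTopologicalAddGroup X] [ContinuousSMul ℝ X]

lemma main_gen (T : X →L[ℝ] X) (x : X)
    (H : ∀ U : Set X, IsOpen U → U.Nonempty → 0 < upperDensity {n : ℕ | (T ^ n) x ∈ U}) :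
    ∀ U : Set X, IsOpen U → U.Nonempty → 0 < upperDensity {n : ℕ | ((-T) ^ n) x ∈ U} := by
  classical
  set N : Submodule ℝ X := (⊥ : Submodule ℝ X).topologicalClosure with hN
  have hNclosed : IsClosed (N : Set X) := Submodule.isClosed_topologicalClosure _
  have hNcoe : (N : Set X) = closure ({0} : Set X) := by
    rw [hN]
    rw [show ((⊥ : Submodule ℝ X).topologicalClosure : Set X) =
      closure ((⊥ : Submodule ℝ X) : Set X) from rfl, Submodule.bot_coe]
  have hsat : ∀ (W : Set X), IsOpen W → ∀ u ∈ W, ∀ v : X, ((v - u) ∈ N) → v ∈ W := by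
    intro W hW u hu v hvu
    have h2 : (u - v) ∈ closure ({0} : Set X) := by
      rw [← hNcoe, show u - v = -(v - u) by abel]
      exact N.neg_mem hvu
    have h1 : u ∈ closure ({v} : Set X) := by
      have h3 := (Homeomorph.addLeft v).image_closure ({0} : Set X)
      have h4 : v + (u - v) ∈ (Homeomorph.addLeft v) '' closure ({0} : Set X) :=
        ⟨u - v, h2, rfl⟩
      rw [h3, Set.image_singleton] at h4
      simpa using h4
    obtain ⟨w, hwW, hwv⟩ := mem_closure_iff.mp h1 W hW hu
    rwa [← Set.mem_singleton_iff.mp hwv]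
  by_cases hNtop : (N : Set X) = Set.univ
  · intro U hU hneU
    obtain ⟨u, hu⟩ := hneU
    have hUuniv : ∀ v : X, v ∈ U := by
      intro v
      apply hsat U hU u hu v
      show (v - u) ∈ (N : Set X)
      rw [hNtop]
      trivial
    have heq : {n : ℕ | ((-T) ^ n) x ∈ U} = Set.univ :=
      Set.eq_univ_of_forall (fun n => hUuniv _)
    rw [heq]
    exact upperDensity_univ_pos
  have hTN : ∀ y ∈ N, T y ∈ N := by
    intro y hy
    have h1 : y ∈ closure ({0} : Set X) := by rw [← hNcoe]; exact hy
    have h2 : T y ∈ closure (T '' ({0} : Set X)) :=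
      image_closure_subset_closure_image T.continuous (Set.mem_image_of_mem T h1)
    have h3 : T '' ({0} : Set X) = ({0} : Set X) := by
      rw [Set.image_singleton, map_zero]
    rw [h3] at h2
    show T y ∈ (N : Set X)
    rw [hNcoe]
    exact h2
  haveI : IsClosed (N : Set X) := hNclosed
  set π : X →ₗ[ℝ] X ⧸ N := N.mkQ with hπ
  have hπcont : Continuous π := continuous_quot_mk
  have hπsurj : Function.Surjective π := Submodule.mkQ_surjective N
  have hπopen : IsOpenMap π := Submodule.isOpenMap_mkQ N
  have hTinv : N ≤ N.comap (T : X →ₗ[ℝ] X) := fun y hy => hTN y hy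
  set Tq0 : (X ⧸ N) →ₗ[ℝ] (X ⧸ N) := Submodule.mapQ N N (T : X →ₗ[ℝ] X) hTinv with hTq0
  have hTqapp : ∀ u : X, Tq0 (π u) = π (T u) := by
    intro u
    rw [hπ, Submodule.mkQ_apply, Submodule.mkQ_apply, hTq0, Submodule.mapQ_apply,
      ContinuousLinearMap.coe_coe]
  have hTq0cont : Continuous Tq0 := by
    have hq : IsQuotientMap (π : X → X ⧸ N) := (Submodule.isOpenQuotientMap_mkQ N).isQuotientMap
    rw [hq.continuous_iff]
    have heq : (⇑Tq0 ∘ ⇑π) = fun u => π (T u) := funext hTqapp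
    rw [heq]
    exact hπcont.comp T.continuous
  set Tq : (X ⧸ N) →L[ℝ] (X ⧸ N) := ⟨Tq0, hTq0cont⟩ with hTq
  have hTqn : ∀ (n : ℕ) (u : X), (Tq ^ n) (π u) = π ((T ^ n) u) := by
    intro n
    induction n with
    | zero => intro u; simp
    | succ n ih =>
      intro u
      rw [pow_succ' Tq n, ContinuousLinearMap.mul_apply, ih u, pow_succ' T n,
        ContinuousLinearMap.mul_apply]
      exact hTqapp _
  have hTqnegn : ∀ (n : ℕ) (u : X), ((-Tq) ^ n) (π u) = π (((-T) ^ n) u) := by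
    intro n u
    rw [neg_pow_apply Tq (π u) n, neg_pow_apply T u n, hTqn n u, map_smul]
  have HQ : ∀ U' : Set (X ⧸ N), IsOpen U' → U'.Nonempty →
      0 < upperDensity {n : ℕ | (Tq ^ n) (π x) ∈ U'} := by
    intro U' hU' hneU'
    obtain ⟨q, hq⟩ := hneU'
    obtain ⟨u, rfl⟩ := hπsurj q
    have hpre : IsOpen (π ⁻¹' U') := hU'.preimage hπcont
    have hprene : (π ⁻¹' U').Nonempty := ⟨u, hq⟩
    have h5 := H (π ⁻¹' U') hpre hprene
    have hseteq : {n : ℕ | (T ^ n) x ∈ π ⁻¹' U'} = {n : ℕ | (Tq ^ n) (π x) ∈ U'} := by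
      ext n
      simp only [Set.mem_setOf_eq, Set.mem_preimage, hTqn n x]
    rwa [hseteq] at h5
  have HQneg := main_t2 Tq (π x) HQ
  intro U hU hneU
  have hU' : IsOpen (π '' U) := hπopen U hU
  have hneU' : (π '' U).Nonempty := hneU.image π
  have h6 := HQneg (π '' U) hU' hneU'
  have hseteq : {n : ℕ | ((-Tq) ^ n) (π x) ∈ π '' U} = {n : ℕ | ((-T) ^ n) x ∈ U} := by
    ext n
    simp only [Set.mem_setOf_eq]
    rw [hTqnegn n x]
    constructor
    · rintro ⟨v, hvU, hveq⟩
      have hdiff : (((-T) ^ n) x - v) ∈ N := by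
        have := (Submodule.Quotient.eq N).mp hveq
        rw [show ((-T) ^ n) x - v = -(v - ((-T) ^ n) x) by abel]
        exact N.neg_mem this
      exact hsat U hU v hvU _ hdiff
    · intro hn
      exact ⟨_, hn, rfl⟩
  rwa [hseteq] at h6

end MainGen

theorem uFHC_neg_iff {X : Type*} [AddCommGroup X] [Module ℝ X] [TopologicalSpace X]
    [IsTopologicalAddGroup X] [ContinuousSMul ℝ X] (T : X →L[ℝ] X) :
    ((∃ x : X, uFHCVector T x) ↔ (∃ x : X, uFHCVector (-T) x)) ∧
      (∀ x : X, uFHCVector T x ↔ uFHCVector (-T) x) := by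
  have hmain : ∀ x : X, uFHCVector T x ↔ uFHCVector (-T) x := by
    intro x
    constructor
    · intro h
      exact main_gen T x h
    · intro h
      have h2 := main_gen (-T) x h
      rwa [neg_neg] at h2
  exact ⟨⟨fun ⟨x, hx⟩ => ⟨x, (hmain x).mp hx⟩, fun ⟨x, hx⟩ => ⟨x, (hmain x).mpr hx⟩⟩, hmain⟩
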